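/- The total number of boolean intervals in the middle order P_n is the double factorial (2n−1)!! = 1·3·5···(2n−1). -/
import Mathlib


/-- The inversion sequence of a permutation `w` of `Fin n` (0-indexed values):
`invSeq w i` counts the values `j < i` appearing after `i` in one-line notation. -/
def invSeq {n : ℕ} (w : Equiv.Perm (Fin n)) (i : Fin n) : ℕ :=
  (Finset.univ.filter (fun j : Fin n => j < i ∧ w.symm i < w.symm j)).card

/-- The middle order on permutations: coordinate-wise comparison of inversion sequences. -/
def midLe {n : ℕ} (v w : Equiv.Perm (Fin n)) : Prop :=
  ∀ i, invSeq v i ≤ invSeq w i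

namespace MiddleAux

open Finset

variable {n : ℕ}

/-- The code of `σ` at `i`: the number of `j < i` with `σ j > σ i`. -/
def code (σ : Equiv.Perm (Fin n)) (i : Fin n) : ℕ :=
  (Finset.univ.filter (fun j : Fin n => j < i ∧ σ i < σ j)).card

lemma invSeq_eq_code (w : Equiv.Perm (Fin n)) (i : Fin n) :
    invSeq w i = code w.symm i := rfl

/-- One direction of the key step: if the codes of `σ` and `τ` agree at `i` and the
relative orders of `σ` and `τ` agree below `i`, then `σ i < σ j → τ i < τ j` for `j < i`. -/
lemma key_subset (σ τ : Equiv.Perm (Fin n)) (i : Fin n)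
    (hcard : code σ i = code τ i)
    (IH : ∀ a b : Fin n, a < i → b < i → (σ a < σ b ↔ τ a < τ b))
    {j : Fin n} (hj : j < i) (hσ : σ i < σ j) : τ i < τ j := by
  by_contra hτ
  have hji : j ≠ i := ne_of_lt hj
  have hτ' : τ j < τ i := (not_lt.mp hτ).lt_of_ne (fun h => hji (τ.injective h))
  set A := Finset.univ.filter (fun k : Fin n => k < i ∧ σ i < σ k) with hA
  set B := Finset.univ.filter (fun k : Fin n => k < i ∧ τ i < τ k) with hB
  have hjA : j ∈ A := by simp [hA, hj, hσ]
  have hBA : B ⊆ A.erase j := by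
    intro b hb
    simp only [hB, Finset.mem_filter, Finset.mem_univ, true_and] at hb
    obtain ⟨hbi, hτb⟩ := hb
    have h1 : τ j < τ b := hτ'.trans hτb
    have h2 : σ j < σ b := (IH j b hj hbi).mpr h1
    have hbj : b ≠ j := fun h => by subst h; exact lt_irrefl _ h1
    refine Finset.mem_erase.mpr ⟨hbj, ?_⟩
    simp [hA, hbi, hσ.trans h2]
  have hlt : B.card < A.card :=
    lt_of_le_of_lt (Finset.card_le_card hBA) (Finset.card_erase_lt_of_mem hjA)
  have hAB : A.card = B.card := hcard
  omega

/-- If the codes agree everywhere, the relative orders agree everywhere. -/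
lemma rel (σ τ : Equiv.Perm (Fin n)) (h : ∀ i, code σ i = code τ i) :
    ∀ j k : Fin n, σ j < σ k ↔ τ j < τ k := by
  suffices H : ∀ m : ℕ, ∀ j k : Fin n, j.val < m → k.val < m → (σ j < σ k ↔ τ j < τ k) by
    intro j k; exact H n j k j.isLt k.isLt
  intro m
  induction m using Nat.strong_induction_on with
  | _ m IH =>
    intro j k hj hk
    rcases lt_trichotomy j k with hjk | rfl | hkj
    · -- k is the larger index
      have IH' : ∀ a b : Fin n, a < k → b < k → (σ a < σ b ↔ τ a < τ b) := by
        intro a b ha hb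
        exact IH k.val hk a b ha hb
      have e1 : σ k < σ j ↔ τ k < τ j :=
        ⟨fun h1 => key_subset σ τ k (h k) IH' hjk h1,
         fun h1 => key_subset τ σ k (h k).symm
            (fun a b ha hb => (IH' a b ha hb).symm) hjk h1⟩
      have hne : j ≠ k := ne_of_lt hjk
      have hσne : σ k ≠ σ j := fun hh => hne (σ.injective hh).symm
      have hτne : τ k ≠ τ j := fun hh => hne (τ.injective hh).symm
      constructor
      · intro h1
        have : ¬ σ k < σ j := not_lt.mpr h1.le
        have h2 : ¬ τ k < τ j := fun hh => this (e1.mpr hh)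
        exact (not_lt.mp h2).lt_of_ne hτne.symm
      · intro h1
        have : ¬ τ k < τ j := not_lt.mpr h1.le
        have h2 : ¬ σ k < σ j := fun hh => this (e1.mp hh)
        exact (not_lt.mp h2).lt_of_ne hσne.symm
    · simp
    · -- j is the larger index
      have IH' : ∀ a b : Fin n, a < j → b < j → (σ a < σ b ↔ τ a < τ b) := by
        intro a b ha hb
        exact IH j.val hj a b ha hb
      exact ⟨fun h1 => key_subset σ τ j (h j) IH' hkj h1,
        fun h1 => key_subset τ σ j (h j).symm
            (fun a b ha hb => (IH' a b ha hb).symm) hkj h1⟩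

/-- The code determines the permutation. -/
lemma code_injective (σ τ : Equiv.Perm (Fin n)) (h : ∀ i, code σ i = code τ i) :
    σ = τ := by
  have R := rel σ τ h
  have hmono : StrictMono (fun a => τ (σ.symm a)) := by
    intro a b hab
    exact (R (σ.symm a) (σ.symm b)).mp (by simpa using hab)
  have hsurj : Function.Surjective (fun a : Fin n => τ (σ.symm a)) :=
    fun y => ⟨σ (τ.symm y), by simp⟩
  have hrange : Set.range (fun a : Fin n => τ (σ.symm a)) = Set.range (id : Fin n → Fin n) := by
    rw [hsurj.range_eq, Set.range_id]
  have inst : WellFoundedLT (Fin n) := inferInstance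
  have hid : (fun a : Fin n => τ (σ.symm a)) = id :=
    (@StrictMono.range_inj (Fin n) (Fin n) _ _ inst _ id hmono strictMono_id).mp hrange
  ext x
  have h2 : τ x = σ x := by
    have := congrFun hid (σ x)
    simpa using this
  exact congrArg Fin.val h2.symm

lemma invSeq_lt (w : Equiv.Perm (Fin n)) (i : Fin n) : invSeq w i < i.val + 1 := by
  have hsub : (Finset.univ.filter (fun j : Fin n => j < i ∧ w.symm i < w.symm j)) ⊆
      Finset.univ.filter (fun j : Fin n => j < i) := by
    intro j hj
    simp only [Finset.mem_filter] at hj ⊢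
    exact ⟨hj.1, hj.2.1⟩
  have h1 : invSeq w i ≤ (Finset.univ.filter (fun j : Fin n => j < i)).card :=
    Finset.card_le_card hsub
  have h2 : (Finset.univ.filter (fun j : Fin n => j < i)) = Finset.Iio i := by
    ext j; simp [Finset.mem_Iio]
  rw [h2, Fin.card_Iio] at h1
  omega

/-- The Lehmer-code map. -/
def toCode (w : Equiv.Perm (Fin n)) : ∀ i : Fin n, Fin (i.val + 1) :=
  fun i => ⟨invSeq w i, invSeq_lt w i⟩

lemma toCode_injective : Function.Injective (toCode (n := n)) := by
  intro v w hvw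
  have h : ∀ i, code v.symm i = code w.symm i := by
    intro i
    have := congrFun hvw i
    have := congrArg Fin.val this
    simpa [toCode, invSeq_eq_code] using this
  have := code_injective v.symm w.symm h
  calc v = v.symm.symm := rfl
    _ = w.symm.symm := by rw [this]
    _ = w := rfl

lemma toCode_bijective : Function.Bijective (toCode (n := n)) := by
  rw [Fintype.bijective_iff_injective_and_card]
  refine ⟨toCode_injective, ?_⟩
  rw [Fintype.card_perm, Fintype.card_pi]
  simp only [Fintype.card_fin, Fintype.card_fin]
  rw [Fin.prod_univ_eq_prod_range (fun i => i + 1) n,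
    Finset.prod_range_add_one_eq_factorial]

/-- The Lehmer code bijection. -/
noncomputable def codeEquiv : Equiv.Perm (Fin n) ≃ (∀ i : Fin n, Fin (i.val + 1)) :=
  Equiv.ofBijective toCode toCode_bijective

/-- Combining two pi-types into a pi-type of products. -/
def prodPi {α β : Fin n → Type*} : ((∀ i, α i) × (∀ i, β i)) ≃ ∀ i, α i × β i where
  toFun p := fun i => (p.1 i, p.2 i)
  invFun f := (fun i => (f i).1, fun i => (f i).2)
  left_inv p := rfl
  right_inv f := rfl

/-- Counting the pairs `(a, b)` in `Fin (m+1)` with `a ≤ b ≤ a + 1`. -/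
def pairEquiv (m : ℕ) :
    {p : Fin (m + 1) × Fin (m + 1) //
        (p.1 : ℕ) ≤ (p.2 : ℕ) ∧ (p.2 : ℕ) ≤ (p.1 : ℕ) + 1} ≃ Fin (2 * m + 1) where
  toFun p := ⟨p.1.1.val + p.1.2.val, by
    have h1 := p.1.1.isLt
    have h2 := p.1.2.isLt
    omega⟩
  invFun k := ⟨(⟨k.val / 2, by have := k.isLt; omega⟩,
      ⟨(k.val + 1) / 2, by have := k.isLt; omega⟩),
    ⟨by show k.val / 2 ≤ (k.val + 1) / 2; omega,
     by show (k.val + 1) / 2 ≤ k.val / 2 + 1; omega⟩⟩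
  left_inv := by
    rintro ⟨⟨a, b⟩, h1, h2⟩
    have h1' : (a : ℕ) ≤ (b : ℕ) := h1
    have h2' : (b : ℕ) ≤ (a : ℕ) + 1 := h2
    apply Subtype.ext
    refine Prod.ext ?_ ?_
    · apply Fin.ext; show (a.val + b.val) / 2 = a.val; omega
    · apply Fin.ext; show (a.val + b.val + 1) / 2 = b.val; omega
  right_inv := by
    rintro ⟨k, hk⟩
    apply Fin.ext
    show k / 2 + (k + 1) / 2 = k
    omega

/-- The big equivalence used in the main count. -/
noncomputable def bigEquiv :
    {p : Equiv.Perm (Fin n) × Equiv.Perm (Fin n) //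
        midLe p.1 p.2 ∧ ∀ i, invSeq p.2 i ≤ invSeq p.1 i + 1} ≃
      ∀ i : Fin n, {q : Fin (i.val + 1) × Fin (i.val + 1) //
        (q.1 : ℕ) ≤ (q.2 : ℕ) ∧ (q.2 : ℕ) ≤ (q.1 : ℕ) + 1} :=
  ((Equiv.subtypeEquiv (codeEquiv.prodCongr codeEquiv) (fun p => by
      constructor
      · rintro ⟨h1, h2⟩ i
        exact ⟨h1 i, h2 i⟩
      · intro h
        exact ⟨fun i => (h i).1, fun i => (h i).2⟩)).trans
    (Equiv.subtypeEquiv prodPi (fun q => Iff.rfl))).trans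
    (Equiv.subtypePiEquivPi)

end MiddleAux

/-- The number of boolean intervals in the middle order `P_n` is the double factorial
`(2n-1)!! = 1·3·5⋯(2n-1)`. -/
theorem middle_order_boolean_interval_count (n : ℕ) :
    Nat.card {p : Equiv.Perm (Fin n) × Equiv.Perm (Fin n) //
        midLe p.1 p.2 ∧ ∀ i, invSeq p.2 i ≤ invSeq p.1 i + 1} =
      ∏ i ∈ Finset.range n, (2 * i + 1) := by
  rw [Nat.card_congr MiddleAux.bigEquiv, Nat.card_eq_fintype_card, Fintype.card_pi]
  have h : ∀ i : Fin n,
      Fintype.card {q : Fin (i.val + 1) × Fin (i.val + 1) //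
        (q.1 : ℕ) ≤ (q.2 : ℕ) ∧ (q.2 : ℕ) ≤ (q.1 : ℕ) + 1} = 2 * i.val + 1 := by
    intro i
    rw [Fintype.card_congr (MiddleAux.pairEquiv i.val), Fintype.card_fin]
  rw [Finset.prod_congr rfl (fun i _ => h i)]
  exact Fin.prod_univ_eq_prod_range (fun i => 2 * i + 1) n
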